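/- arXiv:2104.00995 — 3 statements merged into one kernel-verified Lean document; each statement's English description precedes it below -/
import Mathlib

section
/- For all real z, e^{-z} - 1 + z ≥ z²/(2 + |z|). -/
open Real

private lemma aux_g_nonneg (z : ℝ) (hz : 0 ≤ z) :
    0 ≤ (2 + z) * Real.exp (-z) - (2 - z) := by
  set g : ℝ → ℝ := fun z => (2 + z) * Real.exp (-z) - (2 - z) with hg
  have hderiv : ∀ x : ℝ, HasDerivAt g (1 - (1 + x) * Real.exp (-x)) x := by
    intro x
    have h1 : HasDerivAt (fun x : ℝ => Real.exp (-x)) (-Real.exp (-x)) x := by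
      have := (Real.hasDerivAt_exp (-x)).comp x (hasDerivAt_neg x)
      exact this.congr_deriv (by ring)
    have h2 : HasDerivAt (fun x : ℝ => (2 + x)) 1 x := by
      simpa using (hasDerivAt_id x).const_add 2
    have h3 : HasDerivAt (fun x : ℝ => (2 + x) * Real.exp (-x))
        (1 * Real.exp (-x) + (2 + x) * (-Real.exp (-x))) x := h2.mul h1
    have h4 : HasDerivAt (fun x : ℝ => (2 - x)) (-1) x := by
      have := (hasDerivAt_const x (2:ℝ)).sub (hasDerivAt_id' x)
      exact this.congr_deriv (by norm_num)
    have := h3.sub h4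
    exact this.congr_deriv (by ring)
  have hmono : MonotoneOn g (Set.Ici (0 : ℝ)) := by
    apply monotoneOn_of_deriv_nonneg (convex_Ici 0)
    · exact (Continuous.continuousOn (by continuity))
    · intro x hx
      exact (hderiv x).differentiableAt.differentiableWithinAt
    · intro x hx
      rw [(hderiv x).deriv]
      have hx0 : (0 : ℝ) ≤ x := le_of_lt (by simpa using hx)
      have h1 : (1 + x) ≤ Real.exp x := by
        linarith [Real.add_one_le_exp x]
      have h2 : (1 + x) * Real.exp (-x) ≤ Real.exp x * Real.exp (-x) :=
        mul_le_mul_of_nonneg_right h1 (Real.exp_pos _).le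
      rw [← Real.exp_add] at h2
      simp at h2
      linarith
  have h0 : g 0 = 0 := by simp [hg]
  have := hmono (Set.self_mem_Ici) (Set.mem_Ici.mpr hz) hz
  rw [h0] at this
  exact this

theorem exp_taylor_residual_lower_bound (z : ℝ) :
    Real.exp (-z) - 1 + z ≥ z ^ 2 / (2 + |z|) := by
  rcases le_total 0 z with hz | hz
  · rw [abs_of_nonneg hz]
    have hpos : (0 : ℝ) < 2 + z := by linarith
    rw [ge_iff_le, div_le_iff₀ hpos]
    have := aux_g_nonneg z hz
    nlinarith [Real.exp_pos (-z)]
  · rw [abs_of_nonpos hz]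
    have hx : (0 : ℝ) ≤ -z := by linarith
    have hpos : (0 : ℝ) < 2 + -z := by linarith
    have htaylor : 1 + (-z) + (-z) ^ 2 / 2 ≤ Real.exp (-z) := by
      nlinarith [Real.quadratic_le_exp_of_nonneg hx]
    rw [ge_iff_le, div_le_iff₀ hpos]
    nlinarith
end

section
/- For all real x and z, -ln(1 + tanh(x+z)) + ln(1 + tanh(x)) + z(1 - tanh(x)) ≥ (z²/(2(1+|z|))) · sech²(x). -/
open Real

lemma my_tanh_lt_one (u : ℝ) : Real.tanh u < 1 := by
  rw [Real.tanh_eq_sinh_div_cosh, div_lt_one (Real.cosh_pos u)]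
  nlinarith [Real.cosh_sub_sinh u, Real.exp_pos (-u)]

lemma my_neg_one_lt_tanh (u : ℝ) : -1 < Real.tanh u := by
  rw [Real.tanh_eq_sinh_div_cosh, lt_div_iff₀ (Real.cosh_pos u)]
  nlinarith [Real.cosh_add_sinh u, Real.exp_pos u]

lemma my_one_add_tanh_pos (u : ℝ) : 0 < 1 + Real.tanh u := by
  linarith [my_neg_one_lt_tanh u]

lemma my_one_sub_tanh (u : ℝ) :
    1 - Real.tanh u = (1 + Real.tanh u) * Real.exp (-(2 * u)) := by
  have h1 : Real.exp u ≠ 0 := (Real.exp_pos u).ne'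
  have h2 : Real.cosh u ≠ 0 := (Real.cosh_pos u).ne'
  have e2 : Real.exp (-(2 * u)) = Real.exp (-u) * Real.exp (-u) := by
    rw [← Real.exp_add]; ring_nf
  have e1 : Real.exp u * Real.exp (-u) = 1 := by
    rw [← Real.exp_add]; simp
  rw [Real.tanh_eq_sinh_div_cosh, Real.sinh_eq, Real.cosh_eq, e2]
  have h3 : Real.exp u + Real.exp (-u) ≠ 0 := by positivity
  field_simp
  linear_combination (-2 * Real.exp (-u)) * e1

lemma my_log_one_sub_tanh (u : ℝ) :
    Real.log (1 - Real.tanh u) = Real.log (1 + Real.tanh u) - 2 * u := by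
  rw [my_one_sub_tanh u, Real.log_mul (my_one_add_tanh_pos u).ne' (Real.exp_pos _).ne',
    Real.log_exp]
  ring

lemma my_hasDerivAt_tanh (y : ℝ) :
    HasDerivAt Real.tanh (1 / Real.cosh y ^ 2) y := by
  have h := (Real.hasDerivAt_sinh y).div (Real.hasDerivAt_cosh y) (Real.cosh_pos y).ne'
  have hone : Real.cosh y * Real.cosh y - Real.sinh y * Real.sinh y = 1 := by
    nlinarith [Real.cosh_sq y]
  rw [hone] at h
  have ht : (Real.sinh / Real.cosh) = Real.tanh :=
    funext fun y => (Real.tanh_eq_sinh_div_cosh y).symm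
  rwa [ht] at h

lemma my_sech_div (u : ℝ) :
    1 / Real.cosh u ^ 2 / (1 + Real.tanh u) = 1 - Real.tanh u := by
  have h2 : Real.cosh u ≠ 0 := (Real.cosh_pos u).ne'
  have h1 : (0:ℝ) < 1 + Real.tanh u := my_one_add_tanh_pos u
  rw [Real.tanh_eq_sinh_div_cosh] at h1 ⊢
  rw [div_eq_iff (by positivity)]
  have hc := Real.cosh_sq u
  have e1 : Real.exp (-u) * Real.exp u = 1 := by rw [← Real.exp_add]; simp
  field_simp
  nlinarith [hc, e1]

lemma my_key (x z : ℝ) (hz : 0 ≤ z) :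
    (z ^ 2 + 2 * z) / (2 * (1 + z) ^ 2) * (1 / Real.cosh x) ^ 2
      ≤ Real.tanh (x + z) - Real.tanh x := by
  have hcx := Real.cosh_pos x
  have hcxz := Real.cosh_pos (x + z)
  have h1z : (0:ℝ) < 1 + z := by linarith
  have hdiff : Real.tanh (x + z) - Real.tanh x
      = Real.sinh z / (Real.cosh (x + z) * Real.cosh x) := by
    rw [Real.tanh_eq_sinh_div_cosh, Real.tanh_eq_sinh_div_cosh]
    have hs : Real.sinh z = Real.sinh ((x + z) - x) := by ring_nf
    rw [hs, Real.sinh_sub]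
    field_simp
  have hs0 : 0 ≤ Real.sinh z := by
    have := Real.sinh_le_sinh.mpr hz
    simpa using this
  have hsx : Real.sinh x ≤ Real.cosh x := by
    nlinarith [Real.cosh_sub_sinh x, Real.exp_pos (-x)]
  have hbound : Real.cosh (x + z) ≤ Real.cosh x * Real.exp z := by
    rw [Real.cosh_add]
    nlinarith [Real.cosh_add_sinh z, Real.cosh_pos z, Real.sinh_le_sinh.mpr hz]
  have hE : 1 + z ≤ Real.exp z := by linarith [Real.add_one_le_exp z]
  have hEp := Real.exp_pos z
  have e1 : Real.exp (-z) * Real.exp z = 1 := by rw [← Real.exp_add]; simp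
  -- scalar inequality
  have hscalar : (z ^ 2 + 2 * z) * Real.exp z ≤ 2 * Real.sinh z * (1 + z) ^ 2 := by
    rw [Real.sinh_eq]
    nlinarith [mul_le_mul hE hE (by linarith) (by linarith), Real.exp_pos (-z),
      mul_pos hEp hEp]
  have hLHSeq : (z ^ 2 + 2 * z) / (2 * (1 + z) ^ 2) * (1 / Real.cosh x) ^ 2
      = (z ^ 2 + 2 * z) / (2 * (1 + z) ^ 2 * Real.cosh x ^ 2) := by
    field_simp
  rw [hdiff, hLHSeq, div_le_div_iff₀ (by positivity) (by positivity)]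
  have hz2 : 0 ≤ z ^ 2 + 2 * z := by nlinarith
  nlinarith [mul_le_mul_of_nonneg_left hbound (mul_nonneg hz2 hcx.le),
    mul_le_mul_of_nonneg_left hscalar (mul_nonneg (sq_nonneg (Real.cosh x)) (by norm_num : (0:ℝ) ≤ 1)),
    sq_nonneg (Real.cosh x), mul_pos hcx hcx]

lemma my_main_nonneg (x z : ℝ) (hz : 0 ≤ z) :
    -Real.log (1 + Real.tanh (x + z)) + Real.log (1 + Real.tanh x)
      + z * (1 - Real.tanh x)
      ≥ (z ^ 2 / (2 * (1 + z))) * (1 / Real.cosh x) ^ 2 := by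
  set F : ℝ → ℝ := fun t =>
    -Real.log (1 + Real.tanh (x + t)) + Real.log (1 + Real.tanh x)
      + t * (1 - Real.tanh x) - t ^ 2 / (2 * (1 + t)) * (1 / Real.cosh x) ^ 2
    with hF
  have hderiv : ∀ t : ℝ, 0 ≤ t → HasDerivAt F
      (Real.tanh (x + t) - Real.tanh x
        - (t ^ 2 + 2 * t) / (2 * (1 + t) ^ 2) * (1 / Real.cosh x) ^ 2) t := by
    intro t ht
    have h1 : HasDerivAt (fun t : ℝ => x + t) 1 t := by
      simpa using (hasDerivAt_id t).const_add x
    have h2 : HasDerivAt (fun t : ℝ => Real.tanh (x + t))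
        (1 / Real.cosh (x + t) ^ 2) t := by
      exact ((my_hasDerivAt_tanh (x + t)).comp t h1).congr_deriv (by ring)
    have h3 : HasDerivAt (fun t : ℝ => Real.log (1 + Real.tanh (x + t)))
        ((1 / Real.cosh (x + t) ^ 2) / (1 + Real.tanh (x + t))) t := by
      simpa using (h2.const_add 1).log (my_one_add_tanh_pos (x + t)).ne'
    have h4 : HasDerivAt (fun t : ℝ => t * (1 - Real.tanh x)) (1 - Real.tanh x) t := by
      simpa using (hasDerivAt_id t).mul_const (1 - Real.tanh x)
    have h5den : HasDerivAt (fun t : ℝ => 2 * (1 + t)) 2 t := by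
      simpa using ((hasDerivAt_id t).const_add 1).const_mul 2
    have h5num : HasDerivAt (fun t : ℝ => t ^ 2) (2 * t) t := by
      simpa using hasDerivAt_pow 2 t
    have hne : 2 * (1 + t) ≠ 0 := by positivity
    have h5 : HasDerivAt (fun t : ℝ => t ^ 2 / (2 * (1 + t)))
        ((2 * t * (2 * (1 + t)) - t ^ 2 * 2) / (2 * (1 + t)) ^ 2) t :=
      h5num.div h5den hne
    have h6 := h5.mul_const ((1 / Real.cosh x) ^ 2)
    have h7 := ((h3.neg.add_const (Real.log (1 + Real.tanh x))).add h4).sub h6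
    refine h7.congr_deriv ?_
    rw [my_sech_div (x + t)]
    have h1t : (1 + t) ≠ 0 := by positivity
    field_simp
    ring
  have hF0 : F 0 = 0 := by simp [hF]
  have hcont : ContinuousOn F (Set.Ici 0) := fun t ht =>
    (hderiv t ht).continuousAt.continuousWithinAt
  have hmono : MonotoneOn F (Set.Ici 0) := by
    apply monotoneOn_of_deriv_nonneg (convex_Ici 0) hcont
    · intro t ht
      rw [interior_Ici] at ht
      exact (hderiv t (le_of_lt ht)).differentiableAt.differentiableWithinAt
    · intro t ht
      rw [interior_Ici] at ht
      rw [(hderiv t (le_of_lt ht)).deriv]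
      have := my_key x t (le_of_lt ht)
      linarith
  have hFz : 0 ≤ F z := by
    have := hmono (Set.self_mem_Ici) (Set.mem_Ici.mpr hz) hz
    linarith [hF0 ▸ this]
  have : F z = -Real.log (1 + Real.tanh (x + z)) + Real.log (1 + Real.tanh x)
      + z * (1 - Real.tanh x) - z ^ 2 / (2 * (1 + z)) * (1 / Real.cosh x) ^ 2 := rfl
  rw [this] at hFz
  linarith

theorem log_tanh_taylor_residual_lower_bound (x z : ℝ) :
    -Real.log (1 + Real.tanh (x + z)) + Real.log (1 + Real.tanh x)
      + z * (1 - Real.tanh x)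
      ≥ (z ^ 2 / (2 * (1 + |z|))) * (1 / Real.cosh x) ^ 2 := by
  rcases le_or_gt 0 z with hz | hz
  · rw [abs_of_nonneg hz]
    exact my_main_nonneg x z hz
  · rw [abs_of_neg hz]
    have H := my_main_nonneg (-x) (-z) (by linarith)
    have hx1 : -x + -z = -(x + z) := by ring
    rw [hx1, Real.tanh_neg, Real.tanh_neg, Real.cosh_neg] at H
    have e1 := my_log_one_sub_tanh (x + z)
    have e2 := my_log_one_sub_tanh x
    have h1 : 1 + -Real.tanh (x + z) = 1 - Real.tanh (x + z) := by ring
    have h2 : 1 + -Real.tanh x = 1 - Real.tanh x := by ring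
    rw [h1, h2, e1, e2] at H
    have h3 : (-z) ^ 2 = z ^ 2 := by ring
    rw [h3] at H
    nlinarith [H]
end

section
/- Let a_t, b_t ∈ {-1,+1} for t = 1,…,m, let h_t ∈ ℝ with |h_t| ≤ βd, and let Δ ∈ ℝ^k with corresponding linear terms z_t = Σ_k Δ_k a_t b_{t,k} satisfying |z_t| ≤ ‖Δ‖₁. Then (1/m) Σ_t exp(−h_t)·(exp(−z_t) − 1 + z_t) ≥ exp(−βd) · (1/m) Σ_t z_t²/(2 + ‖Δ‖₁). -/
lemma aux_antitone : ∀ z : ℝ, 0 ≤ z → 2 - z ≤ (2 + z) * Real.exp (-z) := by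
  have hcont : ContinuousOn (fun z : ℝ => 2 - z - (2 + z) * Real.exp (-z)) (Set.Ici 0) := by
    fun_prop
  have hderiv : ∀ x : ℝ, HasDerivAt (fun z : ℝ => 2 - z - (2 + z) * Real.exp (-z))
      ((1 + x) * Real.exp (-x) - 1) x := by
    intro x
    have h1 : HasDerivAt (fun z : ℝ => Real.exp (-z)) (-Real.exp (-x)) x := by
      exact ((Real.hasDerivAt_exp (-x)).comp x (hasDerivAt_neg x)).congr_deriv (by ring)
    have h2 : HasDerivAt (fun z : ℝ => (2 + z) * Real.exp (-z))
        (1 * Real.exp (-x) + (2 + x) * (-Real.exp (-x))) x :=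
      by exact (((hasDerivAt_const x (2:ℝ)).add (hasDerivAt_id x)).mul h1).congr_deriv (by simp only [Pi.add_apply, id]; ring)
    have h3 : HasDerivAt (fun z : ℝ => 2 - z) (-1 : ℝ) x := by
      exact ((hasDerivAt_const x (2:ℝ)).sub (hasDerivAt_id x)).congr_deriv (by ring)
    have := h3.sub h2
    exact this.congr_deriv (by ring)
  have hanti : AntitoneOn (fun z : ℝ => 2 - z - (2 + z) * Real.exp (-z)) (Set.Ici 0) := by
    apply antitoneOn_of_deriv_nonpos (convex_Ici 0) hcont
    · intro x hx
      exact (hderiv x).differentiableAt.differentiableWithinAt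
    · intro x hx
      rw [(hderiv x).deriv]
      have h2 : (1 + x) * Real.exp (-x) ≤ Real.exp x * Real.exp (-x) := by
        apply mul_le_mul_of_nonneg_right _ (Real.exp_pos _).le
        linarith [Real.add_one_le_exp x]
      rw [← Real.exp_add] at h2
      simp at h2
      linarith
  intro z hz
  have := hanti (Set.self_mem_Ici) hz hz
  simp at this
  linarith

lemma key (z : ℝ) : z ^ 2 / (2 + |z|) ≤ Real.exp (-z) - 1 + z := by
  rcases le_or_gt z 0 with hz | hz
  · have habs : |z| = -z := abs_of_nonpos hz
    have hq : 1 + (-z) + (-z) ^ 2 / 2 ≤ Real.exp (-z) :=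
      Real.quadratic_le_exp_of_nonneg (by linarith)
    have h1 : z ^ 2 / (2 + |z|) ≤ z ^ 2 / 2 := by
      apply div_le_div_of_nonneg_left (sq_nonneg z) (by norm_num)
      rw [habs]; linarith
    nlinarith [sq_nonneg z]
  · have habs : |z| = z := abs_of_pos hz
    rw [habs]
    have hpos : (0:ℝ) < 2 + z := by linarith
    rw [div_le_iff₀ hpos]
    have := aux_antitone z hz.le
    nlinarith [this]

open Finset in
/-- Deterministic lower bound on the first-order Taylor residual of the
dynamic interaction screening objective. -/
theorem diso_residual_lower_bound (m k : ℕ) (β d : ℝ)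
    (a : Fin m → ℝ) (b : Fin m → Fin k → ℝ) (h : Fin m → ℝ) (Δ : Fin k → ℝ)
    (z : Fin m → ℝ)
    (ha : ∀ t, a t = -1 ∨ a t = 1) (hb : ∀ t i, b t i = -1 ∨ b t i = 1)
    (hh : ∀ t, |h t| ≤ β * d)
    (hz : ∀ t, z t = ∑ i, Δ i * a t * b t i)
    (hzb : ∀ t, |z t| ≤ ∑ i, |Δ i|) :
    (1 / (m : ℝ)) * ∑ t, Real.exp (-(h t)) * (Real.exp (-(z t)) - 1 + z t)
      ≥ Real.exp (-(β * d)) *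
          ((1 / (m : ℝ)) * ∑ t, (z t) ^ 2 / (2 + ∑ i, |Δ i|)) := by
  set S := ∑ i, |Δ i| with hS
  have hS0 : 0 ≤ S := Finset.sum_nonneg fun i _ => abs_nonneg _
  rw [show Real.exp (-(β * d)) * ((1 / (m : ℝ)) * ∑ t, (z t) ^ 2 / (2 + S))
      = (1 / (m : ℝ)) * ∑ t, Real.exp (-(β * d)) * ((z t) ^ 2 / (2 + S)) by
    rw [Finset.mul_sum, Finset.mul_sum, Finset.mul_sum]
    apply Finset.sum_congr rfl; intro t _; ring]
  apply mul_le_mul_of_nonneg_left _ (by positivity)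
  apply Finset.sum_le_sum
  intro t _
  have hres : (z t) ^ 2 / (2 + S) ≤ Real.exp (-(z t)) - 1 + z t := by
    refine le_trans ?_ (key (z t))
    apply div_le_div_of_nonneg_left (sq_nonneg _) (by positivity)
    linarith [hzb t]
  have hres0 : 0 ≤ Real.exp (-(z t)) - 1 + z t := le_trans (by positivity) hres
  have hexp : Real.exp (-(β * d)) ≤ Real.exp (-(h t)) := by
    apply Real.exp_le_exp.2
    have := abs_le.1 (hh t); linarith
  calc Real.exp (-(β * d)) * ((z t) ^ 2 / (2 + S))
      ≤ Real.exp (-(h t)) * ((z t) ^ 2 / (2 + S)) :=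
        mul_le_mul_of_nonneg_right hexp (by positivity)
    _ ≤ Real.exp (-(h t)) * (Real.exp (-(z t)) - 1 + z t) :=
        mul_le_mul_of_nonneg_left hres (Real.exp_pos _).le
end
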